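/- Fix y > 0. For λ with 0 < λ ≤ y, the function f(x₁, x₂) = (y − x₁x₂)² + λ(x₁² + x₂²) over ℝ² attains its minimum value 2λy − λ², attained at x₁ = x₂ = √(y − λ) (and at x₁ = x₂ = −√(y − λ)). -/
import Mathlib

theorem stmt10 (y l : ℝ) (hy : 0 < y) (hl : 0 < l) (hly : l ≤ y) :
    IsLeast {v : ℝ | ∃ x₁ x₂ : ℝ, v = (y - x₁ * x₂) ^ 2 + l * (x₁ ^ 2 + x₂ ^ 2)}
      (2 * l * y - l ^ 2) ∧
    (y - Real.sqrt (y - l) * Real.sqrt (y - l)) ^ 2 +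
        l * (Real.sqrt (y - l) ^ 2 + Real.sqrt (y - l) ^ 2) = 2 * l * y - l ^ 2 ∧
    (y - (-Real.sqrt (y - l)) * (-Real.sqrt (y - l))) ^ 2 +
        l * ((-Real.sqrt (y - l)) ^ 2 + (-Real.sqrt (y - l)) ^ 2) =
      2 * l * y - l ^ 2 := by
  have hyl : (0:ℝ) ≤ y - l := by linarith
  have hs : Real.sqrt (y - l) * Real.sqrt (y - l) = y - l :=
    Real.mul_self_sqrt hyl
  have hsq : Real.sqrt (y - l) ^ 2 = y - l := by rw [sq]; exact hs
  refine ⟨⟨⟨Real.sqrt (y - l), Real.sqrt (y - l), ?_⟩, ?_⟩, ?_, ?_⟩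
  · rw [hs, hsq]; ring
  · rintro v ⟨x₁, x₂, rfl⟩
    nlinarith [sq_nonneg (x₁ - x₂), sq_nonneg (y - x₁ * x₂ - l), sq_nonneg (x₁ + x₂)]
  · rw [hs, hsq]; ring
  · rw [neg_mul_neg, hs, neg_pow, hsq]; ring
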